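/- An involution w in S_n avoids both patterns 4231 and 3412 if and only if there exists a composition c = (n_1, ..., n_k) of n such that w is the longest element of the Young subgroup S_{n_1} × S_{n_2} × ... × S_{n_k} of S_n. -/

import Mathlib

/-- One-line notation for an element of `S_n`: a list that is a permutation of `1, …, n`. -/
def IsOneLine (n : ℕ) (w : List ℕ) : Prop :=
  w.Perm ((List.range n).map (· + 1))

/-- `w` and `π` differ by a single elementary Knuth relation (first or second kind,
in either direction). -/
def KnuthStep (w π : List ℕ) : Prop :=
  ∃ u v : List ℕ, ∃ x y z : ℕ, x < y ∧ y < z ∧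
    ((w = u ++ y :: x :: z :: v ∧ π = u ++ y :: z :: x :: v) ∨
     (w = u ++ y :: z :: x :: v ∧ π = u ++ y :: x :: z :: v) ∨
     (w = u ++ x :: z :: y :: v ∧ π = u ++ z :: x :: y :: v) ∨
     (w = u ++ z :: x :: y :: v ∧ π = u ++ x :: z :: y :: v))

/-- Knuth equivalence: the reflexive-transitive closure of elementary Knuth relations. -/
def KnuthEquiv : List ℕ → List ℕ → Prop :=
  Relation.ReflTransGen KnuthStep

/-- `w` contains the pattern `3412`: a subsequence `(a, b, c, d)` with `c < d < a < b`. -/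
def Contains3412 (w : List ℕ) : Prop :=
  ∃ a b c d : ℕ, c < d ∧ d < a ∧ a < b ∧ [a, b, c, d].Sublist w

/-- `w` contains the pattern `4231`: a subsequence `(a, b, c, d)` with `d < b < c < a`. -/
def Contains4231 (w : List ℕ) : Prop :=
  ∃ a b c d : ℕ, d < b ∧ b < c ∧ c < a ∧ [a, b, c, d].Sublist w

/-- The decreasing run `hi, hi - 1, …, lo`. -/
def descFromTo (hi lo : ℕ) : List ℕ :=
  (List.range (hi + 1 - lo)).map (fun i => hi - i)

/-- The increasing run `lo, lo + 1, …, hi`. -/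
def ascFromTo (lo hi : ℕ) : List ℕ :=
  (List.range (hi + 1 - lo)).map (fun i => lo + i)

/-- The length of a longest strictly increasing subsequence of `w`. -/
def lisLen (w : List ℕ) : ℕ :=
  ((w.sublists.filter (fun l => decide (l.IsChain (· < ·)))).map List.length).foldr max 0

/-- The length of a longest strictly decreasing subsequence of `w`. -/
def ldsLen (w : List ℕ) : ℕ :=
  ((w.sublists.filter (fun l => decide (l.IsChain (· > ·)))).map List.length).foldr max 0

/-- The one-line word of the longest element of the Young subgroup attached to a
composition: each consecutive block is reversed.  `s` is the offset already consumed. -/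
def blockRevWord : List ℕ → ℕ → List ℕ
  | [], _ => []
  | m :: rest, s => descFromTo (s + m) (s + 1) ++ blockRevWord rest (s + m)


lemma desc_mem {s m x : ℕ} (hx : x ∈ descFromTo (s + m) (s + 1)) : s < x ∧ x ≤ s + m := by
  simp only [descFromTo, List.mem_map, List.mem_range] at hx
  obtain ⟨i, hi, rfl⟩ := hx
  omega

lemma desc_pairwise (s m : ℕ) : (descFromTo (s + m) (s + 1)).Pairwise (· > ·) := by
  rw [List.pairwise_iff_getElem]
  intro i j hi hj hij
  simp only [descFromTo, List.length_map, List.length_range] at hi hj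
  simp only [descFromTo, List.getElem_map, List.getElem_range]
  omega

lemma brw_mem : ∀ (c : List ℕ) (s x : ℕ), x ∈ blockRevWord c s → s < x ∧ x ≤ s + c.sum := by
  intro c
  induction c with
  | nil => intro s x hx; simp [blockRevWord] at hx
  | cons m rest ih =>
    intro s x hx
    simp only [blockRevWord, List.mem_append] at hx
    rcases hx with hx | hx
    · have := desc_mem hx; simp; omega
    · have := ih (s + m) x hx; simp; omega

lemma brw_avoid : ∀ (c : List ℕ) (s : ℕ),
    ¬ Contains4231 (blockRevWord c s) ∧ ¬ Contains3412 (blockRevWord c s) := by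
  intro c
  induction c with
  | nil =>
    intro s
    constructor
    · rintro ⟨a, b, cc, d, _, _, _, hsub⟩
      simp [blockRevWord] at hsub
    · rintro ⟨a, b, cc, d, _, _, _, hsub⟩
      simp [blockRevWord] at hsub
  | cons m rest ih =>
    intro s
    constructor
    · rintro ⟨a, b, cc, d, h1, h2, h3, hsub⟩
      simp only [blockRevWord] at hsub
      rw [List.sublist_append_iff] at hsub
      obtain ⟨l1, l2, heq, hs1, hs2⟩ := hsub
      have hpw := List.Pairwise.sublist hs1 (desc_pairwise s m)
      rcases l1 with _ | ⟨x1, _ | ⟨x2, _ | ⟨x3, _ | ⟨x4, l1⟩⟩⟩⟩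
      · simp only [List.nil_append] at heq
        exact (ih (s + m)).1 ⟨a, b, cc, d, h1, h2, h3, heq ▸ hs2⟩
      · simp only [List.cons_append, List.cons.injEq, List.nil_append] at heq
        obtain ⟨rfl, hl2⟩ := heq
        have ha : a ≤ s + m := (desc_mem (hs1.subset (by simp))).2
        have hb : s + m < b := (brw_mem rest (s + m) b (hs2.subset (by rw [← hl2]; simp))).1
        omega
      · simp only [List.cons_append, List.cons.injEq, List.nil_append] at heq
        obtain ⟨rfl, rfl, hl2⟩ := heq
        have ha : a ≤ s + m := (desc_mem (hs1.subset (by simp))).2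
        have hc : s + m < cc := (brw_mem rest (s + m) cc (hs2.subset (by rw [← hl2]; simp))).1
        omega
      · simp only [List.cons_append, List.cons.injEq, List.nil_append] at heq
        obtain ⟨rfl, rfl, rfl, hl2⟩ := heq
        simp only [List.pairwise_cons] at hpw
        have : b > cc := hpw.2.1 cc (by simp)
        omega
      · rcases l1 with _ | ⟨x5, l1⟩
        · simp only [List.cons_append, List.cons.injEq, List.nil_append] at heq
          obtain ⟨rfl, rfl, rfl, rfl, hl2⟩ := heq
          simp only [List.pairwise_cons] at hpw
          have : b > cc := hpw.2.1 cc (by simp)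
          omega
        · exfalso
          have := congrArg List.length heq
          simp at this
    · rintro ⟨a, b, cc, d, h1, h2, h3, hsub⟩
      simp only [blockRevWord] at hsub
      rw [List.sublist_append_iff] at hsub
      obtain ⟨l1, l2, heq, hs1, hs2⟩ := hsub
      have hpw := List.Pairwise.sublist hs1 (desc_pairwise s m)
      rcases l1 with _ | ⟨x1, _ | ⟨x2, _ | ⟨x3, _ | ⟨x4, l1⟩⟩⟩⟩
      · simp only [List.nil_append] at heq
        exact (ih (s + m)).2 ⟨a, b, cc, d, h1, h2, h3, heq ▸ hs2⟩
      · simp only [List.cons_append, List.cons.injEq, List.nil_append] at heq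
        obtain ⟨rfl, hl2⟩ := heq
        have ha : a ≤ s + m := (desc_mem (hs1.subset (by simp))).2
        have hc : s + m < cc := (brw_mem rest (s + m) cc (hs2.subset (by rw [← hl2]; simp))).1
        omega
      · simp only [List.cons_append, List.cons.injEq, List.nil_append] at heq
        obtain ⟨rfl, rfl, hl2⟩ := heq
        simp only [List.pairwise_cons] at hpw
        have : a > b := hpw.1 b (by simp)
        omega
      · simp only [List.cons_append, List.cons.injEq, List.nil_append] at heq
        obtain ⟨rfl, rfl, rfl, hl2⟩ := heq
        simp only [List.pairwise_cons] at hpw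
        have : a > b := hpw.1 b (by simp)
        omega
      · rcases l1 with _ | ⟨x5, l1⟩
        · simp only [List.cons_append, List.cons.injEq, List.nil_append] at heq
          obtain ⟨rfl, rfl, rfl, rfl, hl2⟩ := heq
          simp only [List.pairwise_cons] at hpw
          have : a > b := hpw.1 b (by simp)
          omega
        · exfalso
          have := congrArg List.length heq
          simp at this


set_option maxRecDepth 4000 in
lemma sublist4 {w : List ℕ} {p1 p2 p3 p4 a b c d : ℕ} (h12 : p1 < p2) (h23 : p2 < p3)
    (h34 : p3 < p4) (ha : w[p1]? = some a) (hb : w[p2]? = some b) (hc : w[p3]? = some c)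
    (hd : w[p4]? = some d) : [a, b, c, d].Sublist w := by
  have hp4 : p4 < w.length := by
    by_contra h
    push_neg at h
    rw [List.getElem?_eq_none h] at hd
    simp at hd
  have hp1 : p1 < w.length := by omega
  have hp2 : p2 < w.length := by omega
  have hp3 : p3 < w.length := by omega
  have e1 : w[p1] = a := by rw [List.getElem?_eq_getElem hp1] at ha; exact Option.some.inj ha
  have e2 : w[p2] = b := by rw [List.getElem?_eq_getElem hp2] at hb; exact Option.some.inj hb
  have e3 : w[p3] = c := by rw [List.getElem?_eq_getElem hp3] at hc; exact Option.some.inj hc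
  have e4 : w[p4] = d := by rw [List.getElem?_eq_getElem hp4] at hd; exact Option.some.inj hd
  have hpair : List.Pairwise (fun x1 x2 : Fin w.length => x1 < x2)
      [⟨p1, hp1⟩, ⟨p2, hp2⟩, ⟨p3, hp3⟩, ⟨p4, hp4⟩] := by
    refine List.Pairwise.cons ?_ (List.Pairwise.cons ?_ (List.Pairwise.cons ?_
      (List.pairwise_singleton _ _)))
    all_goals
      intro x hx
      simp only [List.mem_cons, List.mem_singleton, List.not_mem_nil, or_false] at hx
      first
      | (rcases hx with rfl | rfl | rfl <;> exact Fin.mk_lt_mk.mpr (by omega))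
      | (rcases hx with rfl | rfl <;> exact Fin.mk_lt_mk.mpr (by omega))
      | (rcases hx with rfl <;> exact Fin.mk_lt_mk.mpr (by omega))
  have hsub := List.map_getElem_sublist (l := w) hpair
  simpa [e1, e2, e3, e4] using hsub

lemma lemA : ∀ (n : ℕ) (s : ℕ) (w : List ℕ),
    w.Perm ((List.range n).map (fun i => i + 1 + s)) →
    (∀ i a : ℕ, w[i]? = some a → w[a - 1 - s]? = some (i + 1 + s)) →
    ¬ Contains4231 w → ¬ Contains3412 w →
    ∃ c : List ℕ, (∀ x ∈ c, 0 < x) ∧ c.sum = n ∧ w = blockRevWord c s := by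
  intro n
  induction n using Nat.strong_induction_on with
  | _ n IH =>
  intro s w hperm hinv h4231 h3412
  rcases Nat.eq_zero_or_pos n with rfl | hn
  · refine ⟨[], by simp, by simp, ?_⟩
    have hwnil : w = [] := List.Perm.eq_nil (by simpa using hperm)
    simp [hwnil, blockRevWord]
  have hlen : w.length = n := by simpa using hperm.length_eq
  have hmem : ∀ x ∈ w, s + 1 ≤ x ∧ x ≤ s + n := by
    intro x hx
    have := hperm.mem_iff.mp hx
    simp only [List.mem_map, List.mem_range] at this
    obtain ⟨i, hi, rfl⟩ := this
    omega
  have hnodup : w.Nodup := by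
    refine hperm.nodup_iff.mpr ?_
    exact List.nodup_range.map (fun a b h => by omega)
  have h0lt : 0 < w.length := by omega
  obtain ⟨a0, ha0⟩ : ∃ a, w[0]? = some a := ⟨w[0], List.getElem?_eq_getElem h0lt⟩
  have ha0mem := hmem a0 (List.mem_of_getElem? ha0)
  set m := a0 - s with hm
  have ha0' : a0 = s + m := by omega
  have hm1 : 1 ≤ m := by omega
  have hmn : m ≤ n := by omega
  have ha0'' : w[0]? = some (s + m) := ha0' ▸ ha0
  have hlast : w[m - 1]? = some (s + 1) := by
    have h := hinv 0 a0 ha0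
    have he : a0 - 1 - s = m - 1 := by omega
    have hv : 0 + 1 + s = s + 1 := by omega
    rwa [he, hv] at h
  have hval : ∀ j, j < n → ∃ b, w[j]? = some b := fun j hj =>
    ⟨w[j]'(by omega), List.getElem?_eq_getElem (by omega)⟩
  -- Claim B : middle positions carry values < s + m
  have claimB : ∀ j b, 0 < j → j < m - 1 → w[j]? = some b → b < s + m := by
    intro j b hj0 hjm hb
    by_contra hge
    push_neg at hge
    rcases eq_or_lt_of_le hge with heq | hlt
    · have hsame : w[0]? = w[j]? := by rw [ha0'', hb, ← heq]
      have := (List.getElem?_inj h0lt hnodup).mp hsame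
      omega
    · have hbpos := hinv j b hb
      apply h3412
      refine ⟨s + m, b, s + 1, j + 1 + s, by omega, by omega, by omega, ?_⟩
      exact sublist4 (p1 := 0) (p2 := j) (p3 := m - 1) (p4 := b - 1 - s)
        hj0 hjm (by omega) ha0'' hb hlast hbpos
  -- adjacent positions in the first block are decreasing
  have claimAdj : ∀ j b b', j + 1 < m → w[j]? = some b → w[j+1]? = some b' → b' < b := by
    intro j b b' hjm hb hb'
    have hbmem := hmem b (List.mem_of_getElem? hb)
    have hb'mem := hmem b' (List.mem_of_getElem? hb')
    have hne : b ≠ b' := by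
      intro h
      have hsame : w[j]? = w[(j+1)]? := by rw [hb, hb', h]
      have := (List.getElem?_inj (show j < w.length by omega) hnodup).mp hsame
      omega
    rcases Nat.eq_zero_or_pos j with rfl | hj1
    · -- j = 0 : b = s + m
      have hbeq : b = s + m := by
        rw [ha0''] at hb; exact (Option.some.inj hb).symm
      by_cases hcase : 1 < m - 1
      · have := claimB 1 b' (by omega) hcase hb'
        omega
      · have hm2 : m - 1 = 1 := by omega
        have h1 : w[(0+1)]? = some (s + 1) := by rw [show 0+1 = m-1 by omega]; exact hlast
        rw [hb'] at h1
        injection h1 with hx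
        omega
    · by_cases hcase : j + 1 = m - 1
      · have h1 : w[(j+1)]? = some (s + 1) := by rw [hcase]; exact hlast
        rw [hb'] at h1
        injection h1 with hx
        have hbne1 : b ≠ s + 1 := by
          intro h
          have hsame : w[j]? = w[m-1]? := by rw [hb, hlast, h]
          have := (List.getElem?_inj (show j < w.length by omega) hnodup).mp hsame
          omega
        have := claimB j b hj1 (by omega) hb
        omega
      · have hb'lt : b' < s + m := claimB (j+1) b' (by omega) (by omega) hb'
        have hb'ne1 : b' ≠ s + 1 := by
          intro h
          have hsame : w[(j+1)]? = w[m-1]? := by rw [hb', hlast, h]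
          have := (List.getElem?_inj (show j + 1 < w.length by omega) hnodup).mp hsame
          omega
        have hblt : b < s + m := claimB j b hj1 (by omega) hb
        have hbne1 : b ≠ s + 1 := by
          intro h
          have hsame : w[j]? = w[m-1]? := by rw [hb, hlast, h]
          have := (List.getElem?_inj (show j < w.length by omega) hnodup).mp hsame
          omega
        by_contra hle
        push_neg at hle
        apply h4231
        refine ⟨s + m, b, b', s + 1, by omega, by omega, by omega, ?_⟩
        exact sublist4 (p1 := 0) (p2 := j) (p3 := j + 1) (p4 := m - 1)
          hj1 (by omega) (by omega) ha0'' hb hb' hlast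
  have claimUpper : ∀ j, ∀ b, j < m → w[j]? = some b → b + j ≤ s + m := by
    intro j
    induction j with
    | zero =>
      intro b _ hb
      rw [ha0''] at hb
      have : b = s + m := (Option.some.inj hb).symm
      omega
    | succ j ihj =>
      intro b hjm hb
      obtain ⟨bj, hbj⟩ := hval j (by omega)
      have h1 := ihj bj (by omega) hbj
      have h2 := claimAdj j bj b (by omega) hbj hb
      omega
  have claimLower : ∀ k, ∀ b, k < m → w[m - 1 - k]? = some b → s + 1 + k ≤ b := by
    intro k
    induction k with
    | zero =>
      intro b _ hb
      rw [show m - 1 - 0 = m - 1 from rfl, hlast] at hb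
      have : b = s + 1 := (Option.some.inj hb).symm
      omega
    | succ k ihk =>
      intro b hkm hb
      obtain ⟨b', hb'⟩ := hval (m - 1 - k) (by omega)
      have h1 := ihk b' (by omega) hb'
      have h2 := claimAdj (m - 1 - (k+1)) b b' (by omega) hb
        (by rw [show m - 1 - (k+1) + 1 = m - 1 - k by omega]; exact hb')
      omega
  have claimD : ∀ j, j < m → w[j]? = some (s + m - j) := by
    intro j hj
    obtain ⟨b, hb⟩ := hval j (by omega)
    have h1 := claimUpper j b hj hb
    have h2 := claimLower (m - 1 - j) b (by omega)
      (by rw [show m - 1 - (m - 1 - j) = j by omega]; exact hb)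
    have : b = s + m - j := by omega
    rwa [this] at hb
  have htake : w.take m = descFromTo (s + m) (s + 1) := by
    apply List.ext_getElem
    · simp [descFromTo, hlen]
      omega
    · intro i h1 h2
      have h1' : i < m := by
        simp only [List.length_take] at h1; omega
      have hDi := claimD i h1'
      rw [List.getElem_take]
      have he : w[i]'(by omega) = s + m - i := by
        rw [List.getElem?_eq_getElem (by omega)] at hDi
        exact Option.some.inj hDi
      rw [he]
      simp [descFromTo]
  set w' := w.drop m with hw'def
  have hsplit : ((List.range n).map (fun i => i + 1 + s)) =
      (List.range m).map (fun i => i + 1 + s) ++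
      (List.range (n - m)).map (fun i => i + 1 + (s + m)) := by
    conv_lhs => rw [show n = m + (n - m) by omega, List.range_add]
    rw [List.map_append, List.map_map]
    congr 1
    apply List.map_congr_left
    intro x _
    simp only [Function.comp_apply]
    omega
  have hdescrev : (descFromTo (s + m) (s + 1)).reverse =
      (List.range m).map (fun i => i + 1 + s) := by
    apply List.ext_getElem
    · simp [descFromTo]
    · intro i hi1 hi2
      have hlen1 : (descFromTo (s+m) (s+1)).length = m := by simp [descFromTo]
      have him : i < m := by simpa [hlen1] using hi1
      rw [List.getElem_reverse]
      simp only [descFromTo, List.getElem_map, List.getElem_range, List.length_map,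
        List.length_range]
      omega
  have hpermtake : (w.take m).Perm ((List.range m).map (fun i => i + 1 + s)) := by
    rw [htake, ← hdescrev]
    exact (List.reverse_perm _).symm
  have hpermdrop : w'.Perm ((List.range (n - m)).map (fun i => i + 1 + (s + m))) := by
    have h1 : (w.take m ++ w').Perm
        ((List.range m).map (fun i => i + 1 + s) ++
         (List.range (n - m)).map (fun i => i + 1 + (s + m))) := by
      rw [hw'def, List.take_append_drop, ← hsplit]
      exact hperm
    have h2 := (hpermtake.symm.append_right w').trans h1
    exact (List.perm_append_left_iff _).mp h2
  have hinv' : ∀ i a : ℕ, w'[i]? = some a → w'[a - 1 - (s + m)]? = some (i + 1 + (s + m)) := by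
    intro i a hia
    have hamem : s + m + 1 ≤ a := by
      have := hpermdrop.mem_iff.mp (List.mem_of_getElem? hia)
      simp only [List.mem_map, List.mem_range] at this
      obtain ⟨t, _, rfl⟩ := this
      omega
    have hwa : w[m + i]? = some a := by rw [← List.getElem?_drop]; exact hia
    have h2 := hinv (m + i) a hwa
    rw [hw'def, List.getElem?_drop, show m + (a - 1 - (s + m)) = a - 1 - s by omega,
      show i + 1 + (s + m) = m + i + 1 + s by omega]
    exact h2
  have h4231' : ¬ Contains4231 w' := by
    rintro ⟨a, b, c, d, x, y, z, hs⟩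
    exact h4231 ⟨a, b, c, d, x, y, z, hs.trans (List.drop_sublist m w)⟩
  have h3412' : ¬ Contains3412 w' := by
    rintro ⟨a, b, c, d, x, y, z, hs⟩
    exact h3412 ⟨a, b, c, d, x, y, z, hs.trans (List.drop_sublist m w)⟩
  obtain ⟨c', hc'pos, hc'sum, hc'eq⟩ :=
    IH (n - m) (by omega) (s + m) w' hpermdrop hinv' h4231' h3412'
  refine ⟨m :: c', ?_, ?_, ?_⟩
  · intro x hx
    rcases List.mem_cons.mp hx with rfl | hx
    · omega
    · exact hc'pos x hx
  · simp only [List.sum_cons, hc'sum]; omega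
  · rw [show blockRevWord (m :: c') s = descFromTo (s + m) (s + 1) ++ blockRevWord c' (s + m)
      from rfl, ← htake, ← hc'eq, hw'def, List.take_append_drop]

theorem stmt18 (n : ℕ) (w : List ℕ) (hw : IsOneLine n w)
    (hinv : ∀ i a : ℕ, w[i]? = some a → w[a - 1]? = some (i + 1)) :
    (¬ Contains4231 w ∧ ¬ Contains3412 w) ↔
      ∃ c : List ℕ, (∀ m ∈ c, 0 < m) ∧ c.sum = n ∧ w = blockRevWord c 0 := by
  
  constructor
  · rintro ⟨h4, h3⟩
    obtain ⟨c, h1, h2, h3'⟩ := lemA n 0 w (by simpa [IsOneLine] using hw)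
      (by intro i a h; simpa using hinv i a h) h4 h3
    exact ⟨c, h1, h2, h3'⟩
  · rintro ⟨c, hpos, hsum, rfl⟩
    exact brw_avoid c 0
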